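/- Let H be a complex Hilbert space and m, n natural numbers with n odd and 0 < n ≤ 2m. Let γ : Fin (2m) → B(H) be a family of unitary operators satisfying γ a ∘ γ b + γ b ∘ γ a = 2·η(a)•1 when a = b and γ a ∘ γ b + γ b ∘ γ a = 0 when a ≠ b, where η(a) = 1 if a < n and η(a) = −1 if n ≤ a. Define K := i^{−n(n−1)/2} • (γ 0 ∘ γ 1 ∘ ⋯ ∘ γ (n−1)). Then K is a fundamental symmetry (K = K* and K∘K = 1) and K ∘ γ a ∘ K = (γ a)* for every a ∈ Fin (2m). -/

import Mathlib

open ContinuousLinearMap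

section Aux

variable {A : Type*} [Ring A] [Algebra ℂ A] {ι : Type*} (γ : ι → A)

private lemma tri_arith (k : ℕ) : 2 * k + k * (k - 1) = (k + 1) * (k + 1 - 1) := by
  cases k with
  | zero => rfl
  | succ k' => simp only [Nat.succ_sub_one]; ring

private lemma gamma_move (a : ι) :
    ∀ l : List ι, (∀ b ∈ l, γ a * γ b = -(γ b * γ a)) →
      γ a * (l.map γ).prod = (-1 : ℂ) ^ l.length • ((l.map γ).prod * γ a) := by
  intro l
  induction l with
  | nil => simp
  | cons b t ih =>
    intro h
    have hb := h b (List.mem_cons_self)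
    have ht := ih (fun c hc => h c (List.mem_cons_of_mem _ hc))
    simp only [List.map_cons, List.prod_cons, List.length_cons]
    calc γ a * (γ b * (t.map γ).prod)
        = (γ a * γ b) * (t.map γ).prod := by rw [mul_assoc]
      _ = -(γ b * (γ a * (t.map γ).prod)) := by rw [hb, neg_mul, mul_assoc]
      _ = -(γ b * ((-1 : ℂ) ^ t.length • ((t.map γ).prod * γ a))) := by rw [ht]
      _ = (-1 : ℂ) ^ (t.length + 1) • (γ b * (t.map γ).prod * γ a) := by
          rw [mul_smul_comm, ← neg_smul, pow_succ, mul_assoc]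
          congr 1
          ring

private lemma gamma_move' (a : ι) (l : List ι)
    (h : ∀ b ∈ l, γ a * γ b = -(γ b * γ a)) :
    (l.map γ).prod * γ a = (-1 : ℂ) ^ l.length • (γ a * (l.map γ).prod) := by
  have h1 := gamma_move γ a l h
  have h2 : (-1 : ℂ) ^ l.length • (γ a * (l.map γ).prod)
      = ((-1 : ℂ) ^ l.length * (-1 : ℂ) ^ l.length) • ((l.map γ).prod * γ a) := by
    rw [h1, smul_smul]
  rw [h2, ← pow_add, ← two_mul, pow_mul]
  norm_num

private lemma gamma_sq_prod :
    ∀ l : List ι, l.Nodup → (∀ b ∈ l, γ b * γ b = 1) →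
      (∀ b ∈ l, ∀ c ∈ l, b ≠ c → γ b * γ c = -(γ c * γ b)) →
      (l.map γ).prod * (l.map γ).prod
        = (Complex.I) ^ (l.length * (l.length - 1)) • (1 : A) := by
  intro l
  induction l with
  | nil => simp
  | cons b t ih =>
    intro hnd hsq hac
    have hbt : b ∉ t := (List.nodup_cons.mp hnd).1
    have hndt := (List.nodup_cons.mp hnd).2
    have hsqt : ∀ c ∈ t, γ c * γ c = 1 := fun c hc => hsq c (List.mem_cons_of_mem _ hc)
    have hact : ∀ c ∈ t, ∀ d ∈ t, c ≠ d → γ c * γ d = -(γ d * γ c) :=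
      fun c hc d hd => hac c (List.mem_cons_of_mem _ hc) d (List.mem_cons_of_mem _ hd)
    have hmv := gamma_move' γ b t (fun c hc =>
      hac b (List.mem_cons_self) c (List.mem_cons_of_mem _ hc)
        (fun hbc => hbt (hbc ▸ hc)))
    have hQt := ih hndt hsqt hact
    set k := t.length with hk
    simp only [List.map_cons, List.prod_cons, List.length_cons]
    calc γ b * (t.map γ).prod * (γ b * (t.map γ).prod)
        = γ b * (((t.map γ).prod * γ b) * (t.map γ).prod) := by
          rw [mul_assoc, mul_assoc]
      _ = γ b * (((-1 : ℂ) ^ k • (γ b * (t.map γ).prod)) * (t.map γ).prod) := by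
          rw [hmv]
      _ = (-1 : ℂ) ^ k • ((γ b * γ b) * ((t.map γ).prod * (t.map γ).prod)) := by
          rw [smul_mul_assoc, mul_smul_comm]
          congr 1
          rw [mul_assoc, mul_assoc]
      _ = (-1 : ℂ) ^ k • ((t.map γ).prod * (t.map γ).prod) := by
          rw [hsq b (List.mem_cons_self), one_mul]
      _ = ((-1 : ℂ) ^ k * Complex.I ^ (k * (k - 1))) • (1 : A) := by
          rw [hQt, smul_smul]
      _ = Complex.I ^ ((k + 1) * (k + 1 - 1)) • (1 : A) := by
          congr 1
          have hneg : (-1 : ℂ) ^ k = Complex.I ^ (2 * k) := by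
            rw [pow_mul, Complex.I_sq]
          rw [hneg, ← pow_add]
          congr 1
          rw [hk]
          exact tri_arith t.length

private lemma gamma_rev :
    ∀ l : List ι, l.Nodup →
      (∀ b ∈ l, ∀ c ∈ l, b ≠ c → γ b * γ c = -(γ c * γ b)) →
      (l.reverse.map γ).prod
        = (Complex.I) ^ (l.length * (l.length - 1)) • (l.map γ).prod := by
  intro l
  induction l with
  | nil => simp
  | cons b t ih =>
    intro hnd hac
    have hbt : b ∉ t := (List.nodup_cons.mp hnd).1
    have hndt := (List.nodup_cons.mp hnd).2
    have hact : ∀ c ∈ t, ∀ d ∈ t, c ≠ d → γ c * γ d = -(γ d * γ c) :=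
      fun c hc d hd => hac c (List.mem_cons_of_mem _ hc) d (List.mem_cons_of_mem _ hd)
    have hmv := gamma_move' γ b t (fun c hc =>
      hac b (List.mem_cons_self) c (List.mem_cons_of_mem _ hc)
        (fun hbc => hbt (hbc ▸ hc)))
    have hrevlen : (b :: t).reverse = t.reverse ++ [b] := by simp
    rw [hrevlen]
    simp only [List.map_append, List.prod_append, List.map_cons, List.prod_cons,
      List.map_nil, List.prod_nil, mul_one, List.length_cons]
    rw [ih hndt hact, smul_mul_assoc, hmv, smul_smul]
    congr 1
    have hneg : (-1 : ℂ) ^ t.length = Complex.I ^ (2 * t.length) := by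
      rw [pow_mul, Complex.I_sq]
    rw [hneg, mul_comm (Complex.I ^ (t.length * (t.length - 1))), ← pow_add]
    congr 1
    exact tri_arith t.length

private lemma gamma_move_mem (a : ι) :
    ∀ l : List ι, l.Nodup → a ∈ l → (∀ b ∈ l, γ b * γ b = 1) →
      (∀ b ∈ l, ∀ c ∈ l, b ≠ c → γ b * γ c = -(γ c * γ b)) →
      γ a * (l.map γ).prod = (-1 : ℂ) ^ (l.length - 1) • ((l.map γ).prod * γ a) := by
  intro l
  induction l with
  | nil => intro _ h; exact absurd h List.not_mem_nil
  | cons b t ih =>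
    intro hnd hmem hsq hac
    have hbt : b ∉ t := (List.nodup_cons.mp hnd).1
    have hndt := (List.nodup_cons.mp hnd).2
    have hsqt : ∀ c ∈ t, γ c * γ c = 1 := fun c hc => hsq c (List.mem_cons_of_mem _ hc)
    have hact : ∀ c ∈ t, ∀ d ∈ t, c ≠ d → γ c * γ d = -(γ d * γ c) :=
      fun c hc d hd => hac c (List.mem_cons_of_mem _ hc) d (List.mem_cons_of_mem _ hd)
    simp only [List.map_cons, List.prod_cons, List.length_cons, Nat.add_sub_cancel]
    rcases List.mem_cons.mp hmem with hab | hat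
    · subst hab
      have hmv := gamma_move' γ a t (fun c hc =>
        hac a (List.mem_cons_self) c (List.mem_cons_of_mem _ hc)
          (fun hbc => hbt (hbc ▸ hc)))
      have hone : (-1 : ℂ) ^ t.length * (-1 : ℂ) ^ t.length = 1 := by
        rw [← pow_add, ← two_mul, pow_mul]
        norm_num
      calc γ a * (γ a * (t.map γ).prod)
          = (γ a * γ a) * (t.map γ).prod := by rw [mul_assoc]
        _ = (t.map γ).prod := by rw [hsq a (List.mem_cons_self), one_mul]
        _ = (-1 : ℂ) ^ t.length • (γ a * (t.map γ).prod * γ a) := by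
            rw [mul_assoc, hmv, mul_smul_comm, smul_smul, ← mul_assoc,
              hsq a (List.mem_cons_self), one_mul, hone, one_smul]
    · have hba : b ≠ a := fun hba => hbt (hba ▸ hat)
      have hab : γ a * γ b = -(γ b * γ a) :=
        hac a hmem b (List.mem_cons_self) (fun h => hba h.symm)
      have ht := ih hndt hat hsqt hact
      have hkpos : 1 ≤ t.length := List.length_pos_iff.mpr (List.ne_nil_of_mem hat)
      obtain ⟨k', hk'⟩ : ∃ k', t.length = k' + 1 :=
        ⟨t.length - 1, (Nat.succ_pred_eq_of_pos hkpos).symm⟩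
      calc γ a * (γ b * (t.map γ).prod)
          = (γ a * γ b) * (t.map γ).prod := by rw [mul_assoc]
        _ = -(γ b * (γ a * (t.map γ).prod)) := by rw [hab, neg_mul, mul_assoc]
        _ = -(γ b * ((-1 : ℂ) ^ (t.length - 1) • ((t.map γ).prod * γ a))) := by rw [ht]
        _ = (-1 : ℂ) ^ t.length • (γ b * (t.map γ).prod * γ a) := by
            rw [mul_smul_comm, ← neg_smul, mul_assoc]
            congr 1
            rw [hk']
            simp only [Nat.add_sub_cancel, pow_succ]
            ring

end Aux

/-- Let `γ : Fin (2m) → B(H)` be unitary pseudo-Riemannian gamma matrices for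
a metric of signature `(n, 2m − n)` with `n` odd and `0 < n ≤ 2m`:
`γ a ∘ γ a + γ a ∘ γ a = 2·η(a) • 1` with `η(a) = 1` for `a < n` and `η(a) = −1` otherwise, and
`γ a ∘ γ b + γ b ∘ γ a = 0` for `a ≠ b`. Then `K := i^{−n(n−1)/2} • (γ 0 ∘ ⋯ ∘ γ (n−1))` is a
fundamental symmetry (`K = K*`, `K ∘ K = 1`) and `K ∘ γ a ∘ K = (γ a)*` for every `a`. -/
theorem spacelike_reflection_fundamental_symmetry
    {H : Type*} [NormedAddCommGroup H] [InnerProductSpace ℂ H] [CompleteSpace H]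
    (m n : ℕ) (hodd : Odd n) (hn0 : 0 < n) (hnm : n ≤ 2 * m)
    (γ : Fin (2 * m) → H →L[ℂ] H)
    (hu : ∀ a, γ a ∘L adjoint (γ a) = 1 ∧ adjoint (γ a) ∘L γ a = 1)
    (η : Fin (2 * m) → ℂ)
    (hη : ∀ a, η a = if (a : ℕ) < n then 1 else -1)
    (hcl1 : ∀ a, γ a ∘L γ a + γ a ∘L γ a = (2 * η a) • (1 : H →L[ℂ] H))
    (hcl2 : ∀ a b, a ≠ b → γ a ∘L γ b + γ b ∘L γ a = 0)
    (K : H →L[ℂ] H)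
    (hKdef : K = (Complex.I ^ (-((n * (n - 1) / 2 : ℕ) : ℤ))) •
        (List.ofFn (fun j : Fin n => γ (Fin.castLE hnm j))).prod) :
    adjoint K = K ∧ K ∘L K = 1 ∧ ∀ a, K ∘L γ a ∘L K = adjoint (γ a) := by
  -- notation and basic facts
  set s : ℕ := n * (n - 1) / 2 with hs
  set t : ℕ := n * (n - 1) with hts
  have h2s : 2 * s = t := by
    rw [hs, hts]
    have hev : Even (n * (n - 1)) := (Nat.Odd.sub_odd hodd odd_one).mul_left n
    obtain ⟨c, hc⟩ := hev
    omega
  set c : ℂ := Complex.I ^ (-(s : ℤ)) with hc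
  -- powers of I mod 4
  have hkey : ∀ e f : ℤ, e % 4 = f % 4 → Complex.I ^ e = Complex.I ^ f := by
    intro e f h
    have hd : (4 : ℤ) ∣ f - e := by omega
    obtain ⟨k, hk⟩ := hd
    have hf : f = e + 4 * k := by omega
    rw [hf, zpow_add₀ Complex.I_ne_zero, zpow_mul]
    have h4 : Complex.I ^ (4 : ℤ) = 1 := by
      rw [(by norm_num : (4 : ℤ) = ((4 : ℕ) : ℤ)), zpow_natCast, Complex.I_pow_four]
    rw [h4, one_zpow, mul_one]
  have hIt : (Complex.I : ℂ) ^ t = Complex.I ^ ((t : ℕ) : ℤ) := (zpow_natCast _ _).symm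
  -- algebraic preliminaries on γ
  have hsq : ∀ a, γ a * γ a = η a • 1 := by
    intro a
    have h := hcl1 a
    have h' : (2 : ℂ) • (γ a * γ a) = (2 : ℂ) • (η a • (1 : H →L[ℂ] H)) := by
      rw [smul_smul, ← h, mul_def, two_smul]
    exact smul_right_injective _ two_ne_zero h'
  have hη2 : ∀ a, η a * η a = 1 := by
    intro a
    rw [hη a]
    split <;> ring
  have hac : ∀ a b, a ≠ b → γ a * γ b = -(γ b * γ a) := by
    intro a b hab
    have h := hcl2 a b hab
    rw [mul_def, mul_def]
    exact eq_neg_of_add_eq_zero_left h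
  -- the list of spacelike indices
  set l₀ : List (Fin (2 * m)) := List.ofFn (fun j : Fin n => Fin.castLE hnm j) with hl₀
  have hlen : l₀.length = n := List.length_ofFn
  have hmeml : ∀ b : Fin (2 * m), b ∈ l₀ ↔ (b : ℕ) < n := by
    intro b
    rw [hl₀, List.mem_ofFn]
    constructor
    · rintro ⟨j, rfl⟩
      exact j.isLt
    · intro hb
      exact ⟨⟨(b : ℕ), hb⟩, by ext; rfl⟩
  have hnd : l₀.Nodup := List.nodup_ofFn.mpr (Fin.castLE_injective hnm)
  set P : H →L[ℂ] H := (l₀.map γ).prod with hPdef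
  have hKP : K = c • P := by
    rw [hKdef, hPdef, hl₀, List.map_ofFn]
    rfl
  have hsql : ∀ b ∈ l₀, γ b * γ b = 1 := by
    intro b hb
    rw [hsq b, hη b, if_pos ((hmeml b).mp hb), one_smul]
  have hacl : ∀ b ∈ l₀, ∀ c' ∈ l₀, b ≠ c' → γ b * γ c' = -(γ c' * γ b) :=
    fun b _ c' _ h => hac b c' h
  have hPP : P * P = Complex.I ^ t • 1 := by
    have h := gamma_sq_prod γ l₀ hnd hsql hacl
    rw [hlen] at h
    rw [hPdef, h, hts]
  have hrev : (l₀.reverse.map γ).prod = Complex.I ^ t • P := by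
    have h := gamma_rev γ l₀ hnd hacl
    rw [hlen] at h
    rw [h, hts, hPdef]
  -- adjoints of the gammas
  have hu1 : ∀ a, adjoint (γ a) * γ a = 1 := fun a => by rw [mul_def]; exact (hu a).2
  have hadj : ∀ a, adjoint (γ a) = η a • γ a := by
    intro a
    have h1 : γ a * (η a • γ a) = 1 := by
      rw [mul_smul_comm, hsq a, smul_smul, hη2 a, one_smul]
    calc adjoint (γ a) = adjoint (γ a) * (γ a * (η a • γ a)) := by rw [h1, mul_one]
      _ = (adjoint (γ a) * γ a) * (η a • γ a) := by rw [mul_assoc]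
      _ = η a • γ a := by rw [hu1 a, one_mul]
  have hadjl : ∀ b ∈ l₀, adjoint (γ b) = γ b := by
    intro b hb
    rw [hadj b, hη b, if_pos ((hmeml b).mp hb), one_smul]
  have hadjprod : ∀ l : List (Fin (2 * m)), (∀ b ∈ l, adjoint (γ b) = γ b) →
      adjoint ((l.map γ).prod) = (l.reverse.map γ).prod := by
    intro l
    induction l with
    | nil => intro _; rw [show ((List.nil.map γ).prod : H →L[ℂ] H) = 1 from rfl, ← star_eq_adjoint, star_one]; rfl
    | cons b u ih =>
      intro h
      have hb := h b (List.mem_cons_self)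
      have hu' := ih (fun d hd => h d (List.mem_cons_of_mem _ hd))
      simp only [List.map_cons, List.prod_cons, List.reverse_cons, List.map_append,
        List.prod_append, List.map_nil, List.prod_nil, mul_one]
      rw [← star_eq_adjoint, star_mul, star_eq_adjoint, star_eq_adjoint, hu', hb]
  have hadjP : adjoint P = Complex.I ^ t • P := by
    rw [hPdef, hadjprod l₀ hadjl, hrev]
  -- scalar identities
  have htz : (t : ℤ) = 2 * (s : ℤ) := by exact_mod_cast h2s.symm
  have hc2 : c * c * Complex.I ^ t = 1 := by
    rw [hc, hIt, ← zpow_add₀ Complex.I_ne_zero, ← zpow_add₀ Complex.I_ne_zero]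
    have h0 : (-(s : ℤ) + -(s : ℤ) + (t : ℤ)) = 0 := by omega
    rw [h0, zpow_zero]
  have hccadj : (starRingEnd ℂ) c * Complex.I ^ t = c := by
    have hconj : (starRingEnd ℂ) c = Complex.I ^ (s : ℤ) := by
      rw [hc, map_zpow₀, Complex.conj_I, ← Complex.inv_I, inv_zpow, ← zpow_neg, neg_neg]
    rw [hconj, hc, hIt, ← zpow_add₀ Complex.I_ne_zero]
    apply hkey
    omega
  refine ⟨?_, ?_, ?_⟩
  · -- adjoint K = K
    rw [hKP, ← star_eq_adjoint, star_smul, star_eq_adjoint, hadjP, RCLike.star_def,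
      smul_smul, hccadj]
  · -- K ∘ K = 1
    rw [← mul_def, hKP, smul_mul_assoc, mul_smul_comm, hPP, smul_smul, smul_smul,
      hc2, one_smul]
  · -- K γ K = adjoint γ
    intro a
    rw [← mul_def, ← mul_def, hKP, hadj a]
    by_cases hcase : (a : ℕ) < n
    · -- spacelike
      have hmm := gamma_move_mem γ a l₀ hnd ((hmeml a).mpr hcase) hsql hacl
      rw [hlen, Even.neg_one_pow (Nat.Odd.sub_odd hodd odd_one), one_smul, ← hPdef] at hmm
      have hinner : P * (γ a * P) = Complex.I ^ t • γ a := by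
        rw [← mul_assoc, ← hmm, mul_assoc, hPP, mul_smul_comm, mul_one]
      calc (c • P) * (γ a * (c • P))
          = (c * c) • (P * (γ a * P)) := by
            rw [smul_mul_assoc, mul_smul_comm, mul_smul_comm, smul_smul]
      _ = (c * c * Complex.I ^ t) • γ a := by rw [hinner, smul_smul]
      _ = η a • γ a := by rw [hc2, hη a, if_pos hcase]
    · -- timelike
      have hne : ∀ b ∈ l₀, γ a * γ b = -(γ b * γ a) := by
        intro b hb
        refine hac a b fun h => ?_
        have := (hmeml b).mp hb
        rw [← h] at this
        omega
      have hmv := gamma_move γ a l₀ hne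
      rw [hlen, Odd.neg_one_pow hodd, neg_smul, one_smul, ← hPdef] at hmv
      have h2 : P * γ a = -(γ a * P) := by rw [hmv, neg_neg]
      have hinner : P * (γ a * P) = Complex.I ^ t • (-(γ a)) := by
        rw [← mul_assoc, h2, neg_mul, mul_assoc, hPP, mul_smul_comm, mul_one, smul_neg]
      calc (c • P) * (γ a * (c • P))
          = (c * c) • (P * (γ a * P)) := by
            rw [smul_mul_assoc, mul_smul_comm, mul_smul_comm, smul_smul]
      _ = (c * c * Complex.I ^ t) • (-(γ a)) := by rw [hinner, smul_smul]
      _ = η a • γ a := by rw [hc2, hη a, if_neg hcase, one_smul, neg_smul, one_smul]
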